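/- Let X be a uniformly convex Banach space having the Opial property, let C ⊆ X be a closed convex set, let T : C → C be α-nonexpansive for some multi-index α (with α₁ > 0, α_{n₀} > 0, α_j ≥ 0, Σ α_j = 1), asymptotically regular at some x ∈ C, and with F(T) nonempty. Define φ : F(T) → [0,∞) by φ(y) = limₙ ‖Tⁿx − y‖ (this limit exists for every y ∈ F(T)). Then there exists a unique y₀ ∈ F(T) such that φ(y₀) ≤ φ(y) for all y ∈ F(T); i.e., φ attains its infimum on F(T) at exactly one point. -/

import Mathlib

open Filter Topology

/-- A sequence `u` converges weakly to `y` in a normed space. -/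
def WeakConvSeq {X : Type*} [NormedAddCommGroup X] [NormedSpace ℝ X]
    (u : ℕ → X) (y : X) : Prop :=
  ∀ f : X →L[ℝ] ℝ, Filter.Tendsto (fun n => f (u n)) Filter.atTop (nhds (f y))

/-- A normed space has the Opial property. -/
def OpialSpace (X : Type*) [NormedAddCommGroup X] [NormedSpace ℝ X] : Prop :=
  ∀ (u : ℕ → X) (u₀ : X), WeakConvSeq u u₀ →
    ∀ v : X, v ≠ u₀ →
      Filter.liminf (fun n => ‖u n - u₀‖) Filter.atTop <
        Filter.liminf (fun n => ‖u n - v‖) Filter.atTop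

lemma uc_scaled {X : Type*} [NormedAddCommGroup X] [NormedSpace ℝ X] [UniformConvexSpace X]
    {ε R₀ : ℝ} (hε : 0 < ε) (hR₀ : 0 < R₀) :
    ∃ δ : ℝ, 0 < δ ∧ δ ≤ 1 ∧ ∀ R : ℝ, 0 < R → R ≤ R₀ → ∀ a b : X, ‖a‖ ≤ R → ‖b‖ ≤ R →
      ε ≤ ‖a - b‖ → ‖a + b‖ ≤ (2 - δ) * R := by
  obtain ⟨δ, hδ, h⟩ := exists_forall_closed_ball_dist_add_le_two_sub X (div_pos hε hR₀)
  refine ⟨min δ 1, lt_min hδ one_pos, min_le_right _ _, fun R hR hRR₀ a b ha hb hab => ?_⟩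
  have hRinv : (0:ℝ) < R⁻¹ := inv_pos.2 hR
  have hu : ‖R⁻¹ • a‖ ≤ 1 := by
    rw [norm_smul, Real.norm_eq_abs, abs_of_pos hRinv, inv_mul_le_iff₀ hR, mul_one]; exact ha
  have hv : ‖R⁻¹ • b‖ ≤ 1 := by
    rw [norm_smul, Real.norm_eq_abs, abs_of_pos hRinv, inv_mul_le_iff₀ hR, mul_one]; exact hb
  have huv : ε / R₀ ≤ ‖R⁻¹ • a - R⁻¹ • b‖ := by
    rw [← smul_sub, norm_smul, Real.norm_eq_abs, abs_of_pos hRinv, ← div_eq_inv_mul]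
    calc ε / R₀ ≤ ε / R := div_le_div_of_nonneg_left hε.le hR hRR₀
      _ ≤ ‖a - b‖ / R := by gcongr
  have := h hu hv huv
  rw [← smul_add, norm_smul, Real.norm_eq_abs, abs_of_pos hRinv, ← div_eq_inv_mul,
    div_le_iff₀ hR] at this
  calc ‖a + b‖ ≤ (2 - δ) * R := this
    _ ≤ (2 - min δ 1) * R := by
        have : min δ 1 ≤ δ := min_le_left _ _
        nlinarith

theorem unique_minimizer_of_phi
    {X : Type*} [NormedAddCommGroup X] [NormedSpace ℝ X] [CompleteSpace X]
    [UniformConvexSpace X] (hX_opial : OpialSpace X)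
    (C : Set X) (hC_closed : IsClosed C) (hC_convex : Convex ℝ C)
    (T : X → X) (hT : Set.MapsTo T C C)
    (n₀ : ℕ) (hn₀ : 0 < n₀) (α : Fin n₀ → ℝ)
    (hα_nonneg : ∀ j, 0 ≤ α j)
    (hα_first : 0 < α ⟨0, hn₀⟩)
    (hα_last : 0 < α ⟨n₀ - 1, by omega⟩)
    (hα_sum : ∑ j, α j = 1)
    (hne : ∀ x ∈ C, ∀ y ∈ C,
      ∑ j : Fin n₀, α j * ‖T^[(j : ℕ) + 1] x - T^[(j : ℕ) + 1] y‖ ≤ ‖x - y‖)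
    (hF : ∃ z ∈ C, T z = z)
    (x : X) (hx : x ∈ C)
    (har : Filter.Tendsto (fun n => ‖T^[n] x - T^[n + 1] x‖) Filter.atTop (nhds 0))
    (φ : X → ℝ)
    (hφ : ∀ y ∈ C, T y = y →
      Filter.Tendsto (fun n => ‖T^[n] x - y‖) Filter.atTop (nhds (φ y))) :
    ∃! y₀ : X, y₀ ∈ C ∧ T y₀ = y₀ ∧ ∀ y ∈ C, T y = y → φ y₀ ≤ φ y := by
  classical
  obtain ⟨z, hzC, hzT⟩ := hF
  have haC : ∀ n : ℕ, T^[n] x ∈ C := fun n => hT.iterate n hx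
  obtain ⟨M, hM⟩ : ∃ M : ℝ, ∀ n, ‖T^[n] x - z‖ ≤ M := by
    obtain ⟨M, hM⟩ := (hφ z hzC hzT).bddAbove_range
    exact ⟨M, fun n => hM ⟨n, rfl⟩⟩
  obtain ⟨U, hU⟩ := Ultrafilter.exists_le (atTop : Filter ℕ)
  -- ψ w = ultrafilter limit of ‖Tⁿx - w‖
  have hpsi : ∀ w : X, ∃ ℓ : ℝ, 0 ≤ ℓ ∧ Tendsto (fun n => ‖T^[n] x - w‖) ↑U (𝓝 ℓ) := by
    intro w
    have hsub : ∀ n : ℕ, ‖T^[n] x - w‖ ∈ Set.Icc (0:ℝ) (M + ‖z - w‖) := by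
      intro n
      refine ⟨norm_nonneg _, ?_⟩
      calc ‖T^[n] x - w‖ = ‖(T^[n] x - z) + (z - w)‖ := by rw [sub_add_sub_cancel]
        _ ≤ ‖T^[n] x - z‖ + ‖z - w‖ := norm_add_le _ _
        _ ≤ M + ‖z - w‖ := add_le_add (hM n) le_rfl
    obtain ⟨ℓ, hℓmem, hℓ⟩ := isCompact_Icc.ultrafilter_le_nhds
      (U.map fun n => ‖T^[n] x - w‖)
      (by rw [Ultrafilter.coe_map, Filter.le_principal_iff, Filter.mem_map]
          exact Filter.univ_mem' hsub)
    refine ⟨ℓ, hℓmem.1, ?_⟩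
    rwa [Ultrafilter.coe_map] at hℓ
  choose ψ hψ0 hψt using hpsi
  have hψφ : ∀ y, y ∈ C → T y = y → ψ y = φ y := fun y hyC hyT =>
    tendsto_nhds_unique (hψt y) ((hφ y hyC hyT).mono_left hU)
  -- triangle bound
  have hψ_tri : ∀ w u : X, ‖w - u‖ ≤ ψ w + ψ u := by
    intro w u
    refine le_of_tendsto_of_tendsto' (f := fun _ : ℕ => ‖w - u‖)
      tendsto_const_nhds ((hψt w).add (hψt u)) (fun n => ?_)
    have h : w - u = (T^[n] x - u) - (T^[n] x - w) := by abel
    rw [h]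
    exact (norm_sub_le _ _).trans_eq (add_comm _ _)
  -- 1-Lipschitz (one-sided suffices)
  have hψ_lip1 : ∀ w u : X, ψ w ≤ ψ u + ‖w - u‖ := by
    intro w u
    refine le_of_tendsto_of_tendsto' (hψt w) ((hψt u).add_const ‖w - u‖) (fun n => ?_)
    calc ‖T^[n] x - w‖ = ‖(T^[n] x - u) + (u - w)‖ := by rw [sub_add_sub_cancel]
      _ ≤ ‖T^[n] x - u‖ + ‖u - w‖ := norm_add_le _ _
      _ = ‖T^[n] x - u‖ + ‖w - u‖ := by rw [norm_sub_rev u w]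
  -- asymptotic regularity: finite shifts vanish
  have hshift0 : ∀ m : ℕ, Tendsto (fun n => ‖T^[n + m] x - T^[n] x‖) atTop (𝓝 0) := by
    intro m
    induction m with
    | zero => simp [tendsto_const_nhds]
    | succ m ih =>
      have h1 : Tendsto (fun n : ℕ => ‖T^[n + m] x - T^[n + m + 1] x‖) atTop (𝓝 0) := by
        have := har.comp (tendsto_add_atTop_nat m)
        simp only [Function.comp_def] at this
        exact this
      refine squeeze_zero (fun n => norm_nonneg _)
        (g := fun n => ‖T^[n + m] x - T^[n + m + 1] x‖ + ‖T^[n + m] x - T^[n] x‖)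
        (fun n => ?_) (by simpa using h1.add ih)
      calc ‖T^[n + (m + 1)] x - T^[n] x‖
          = ‖(T^[n + m + 1] x - T^[n + m] x) + (T^[n + m] x - T^[n] x)‖ := by
            rw [← add_assoc, sub_add_sub_cancel]
        _ ≤ ‖T^[n + m + 1] x - T^[n + m] x‖ + ‖T^[n + m] x - T^[n] x‖ := norm_add_le _ _
        _ = ‖T^[n + m] x - T^[n + m + 1] x‖ + ‖T^[n + m] x - T^[n] x‖ := by
            rw [norm_sub_rev (T^[n + m + 1] x)]
  -- shifted sequences have the same ultrafilter limit
  have hψ_shift : ∀ (m : ℕ) (w : X),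
      Tendsto (fun n => ‖T^[n + m] x - w‖) ↑U (𝓝 (ψ w)) := by
    intro m w
    have habs : ∀ n : ℕ, |‖T^[n + m] x - w‖ - ‖T^[n] x - w‖| ≤ ‖T^[n + m] x - T^[n] x‖ := by
      intro n
      have := abs_norm_sub_norm_le (T^[n + m] x - w) (T^[n] x - w)
      rwa [sub_sub_sub_cancel_right] at this
    have h0 := (hshift0 m).mono_left hU
    have hd : Tendsto (fun n => ‖T^[n + m] x - w‖ - ‖T^[n] x - w‖) ↑U (𝓝 0) := by
      refine tendsto_of_tendsto_of_tendsto_of_le_of_le (by simpa using h0.neg) h0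
        (fun n => (abs_le.1 (habs n)).1) (fun n => (abs_le.1 (habs n)).2)
    have := (hψt w).add hd
    rw [add_zero] at this
    refine this.congr (fun n => ?_)
    ring
  -- key inequality
  have hψ_key : ∀ w, w ∈ C → (∑ j : Fin n₀, α j * ψ (T^[(j : ℕ) + 1] w)) ≤ ψ w := by
    intro w hw
    have hL : Tendsto (fun n => ∑ j : Fin n₀, α j * ‖T^[n + ((j : ℕ) + 1)] x - T^[(j : ℕ) + 1] w‖)
        ↑U (𝓝 (∑ j : Fin n₀, α j * ψ (T^[(j : ℕ) + 1] w))) :=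
      tendsto_finset_sum _ (fun j _ => ((hψ_shift ((j : ℕ) + 1) (T^[(j : ℕ) + 1] w)).const_mul (α j)))
    refine le_of_tendsto_of_tendsto' hL (hψt w) (fun n => ?_)
    calc ∑ j : Fin n₀, α j * ‖T^[n + ((j : ℕ) + 1)] x - T^[(j : ℕ) + 1] w‖
        = ∑ j : Fin n₀, α j * ‖T^[(j : ℕ) + 1] (T^[n] x) - T^[(j : ℕ) + 1] w‖ := by
          refine Finset.sum_congr rfl (fun j _ => ?_)
          rw [add_comm n ((j : ℕ) + 1), Function.iterate_add_apply]
      _ ≤ ‖T^[n] x - w‖ := hne (T^[n] x) (haC n) w hw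
  -- the infimum
  set S : Set ℝ := ψ '' C with hS_def
  have hSne : S.Nonempty := ⟨ψ z, z, hzC, rfl⟩
  have hSbdd : BddBelow S := by
    refine ⟨0, fun r hr => ?_⟩
    obtain ⟨v, _, rfl⟩ := hr
    exact hψ0 v
  set d : ℝ := sInf S with hd_def
  have hd0 : 0 ≤ d := by
    refine le_csInf hSne (fun r hr => ?_)
    obtain ⟨v, _, rfl⟩ := hr
    exact hψ0 v
  have hd_le : ∀ u, u ∈ C → d ≤ ψ u := fun u hu => csInf_le hSbdd ⟨u, hu, rfl⟩
  -- midpoint estimate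
  have hmid : ∀ (w u : X), w ∈ C → u ∈ C → ∀ ρ δ : ℝ, ψ w < ρ → ψ u < ρ →
      (∀ a b : X, ‖a‖ ≤ ρ → ‖b‖ ≤ ρ → ‖w - u‖ ≤ ‖a - b‖ → ‖a + b‖ ≤ (2 - δ) * ρ) →
      d ≤ (2 - δ) * ρ / 2 := by
    intro w u hwC huC ρ δ hw hu huc
    set m : X := (1/2 : ℝ) • w + (1/2 : ℝ) • u with hm_def
    have hmC : m ∈ C := hC_convex hwC huC (by norm_num) (by norm_num) (by norm_num)
    have hev : ∀ᶠ n in (↑U : Filter ℕ), ‖T^[n] x - m‖ ≤ (2 - δ) * ρ / 2 := by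
      filter_upwards [(hψt w).eventually_lt_const hw, (hψt u).eventually_lt_const hu]
        with n h1 h2
      have h3 : ‖w - u‖ ≤ ‖(T^[n] x - w) - (T^[n] x - u)‖ := by
        have h : (T^[n] x - w) - (T^[n] x - u) = u - w := by abel
        rw [h, norm_sub_rev]
      have h4 : ‖(T^[n] x - w) + (T^[n] x - u)‖ ≤ (2 - δ) * ρ := huc _ _ h1.le h2.le h3
      have h5 : (T^[n] x - w) + (T^[n] x - u) = (2 : ℝ) • (T^[n] x - m) := by
        rw [hm_def]; module
      rw [h5, norm_smul, Real.norm_ofNat] at h4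
      linarith
    exact le_trans (hd_le m hmC) (le_of_tendsto (hψt m) hev)
  -- key separation estimate
  have hkey : ∀ ε : ℝ, 0 < ε → ∃ η : ℝ, 0 < η ∧ ∀ w u : X, w ∈ C → u ∈ C →
      ψ w < d + η → ψ u < d + η → ‖w - u‖ < ε := by
    intro ε hε
    rcases eq_or_lt_of_le hd0 with hd | hd
    · refine ⟨ε / 4, by positivity, fun w u hwC huC hw hu => ?_⟩
      have h1 := hψ_tri w u
      rw [← hd] at hw hu
      linarith
    · obtain ⟨δ, hδ0, hδ1, huc⟩ := uc_scaled (X := X) hε (show (0:ℝ) < d + 1 by linarith)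
      refine ⟨min 1 (δ * d / 4), ?_, fun w u hwC huC hw hu => ?_⟩
      · have : 0 < δ * d / 4 := by positivity
        exact lt_min one_pos this
      by_contra hcon
      push_neg at hcon
      set η := min 1 (δ * d / 4) with hη_def
      have hη1 : η ≤ 1 := min_le_left _ _
      have hη2 : η ≤ δ * d / 4 := min_le_right _ _
      have hη0 : 0 < η := lt_min one_pos (by positivity)
      have hρ : 0 < d + η := by linarith
      have hd2 := hmid w u hwC huC (d + η) δ hw hu (fun a b ha hb hab =>
        huc (d + η) hρ (by linarith) a b ha hb (le_trans hcon hab))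
      nlinarith [mul_pos hδ0 hη0, mul_pos hδ0 hd]
  -- minimizing sequence
  have hmin_seq : ∀ k : ℕ, ∃ v : X, v ∈ C ∧ ψ v < d + 1 / ((k : ℝ) + 1) := by
    intro k
    have h1 : d < d + 1 / ((k : ℝ) + 1) := lt_add_of_pos_right d (by positivity)
    obtain ⟨r, hr, hrlt⟩ := exists_lt_of_csInf_lt hSne h1
    obtain ⟨v, hvC, rfl⟩ := hr
    exact ⟨v, hvC, hrlt⟩
  choose w hwC hwlt using hmin_seq
  have hcauchy : CauchySeq w := by
    rw [Metric.cauchySeq_iff]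
    intro ε hε
    obtain ⟨η, hη0, hkey'⟩ := hkey ε hε
    obtain ⟨K, hK⟩ := exists_nat_one_div_lt hη0
    refine ⟨K, fun k hk l hl => ?_⟩
    have hbound : ∀ i : ℕ, K ≤ i → ψ (w i) < d + η := by
      intro i hi
      refine lt_of_lt_of_le (hwlt i) ?_
      have h2 : (1 : ℝ) / ((i : ℝ) + 1) ≤ 1 / ((K : ℝ) + 1) := by
        apply one_div_le_one_div_of_le (by positivity)
        have : (K : ℝ) ≤ (i : ℝ) := by exact_mod_cast hi
        linarith
      linarith [hK]
    rw [dist_eq_norm]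
    exact hkey' _ _ (hwC k) (hwC l) (hbound k hk) (hbound l hl)
  obtain ⟨z₀, hz₀⟩ := cauchySeq_tendsto_of_complete hcauchy
  have hz₀C : z₀ ∈ C := hC_closed.mem_of_tendsto hz₀ (Filter.Eventually.of_forall hwC)
  have h1 : Tendsto (fun k => ψ (w k)) atTop (𝓝 d) := by
    refine tendsto_of_tendsto_of_tendsto_of_le_of_le (g := fun _ : ℕ => d)
      (h := fun k : ℕ => d + 1 / ((k : ℝ) + 1)) tendsto_const_nhds ?_
      (fun k => hd_le _ (hwC k)) (fun k => (hwlt k).le)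
    simpa using (tendsto_const_nhds (x := d) (f := atTop (α := ℕ))).add
      tendsto_one_div_add_atTop_nhds_zero_nat
  have hnorm : Tendsto (fun k => ‖w k - z₀‖) atTop (𝓝 0) := by
    rw [← tendsto_iff_norm_sub_tendsto_zero]
    exact hz₀
  have h2 : Tendsto (fun k => ψ (w k)) atTop (𝓝 (ψ z₀)) := by
    refine tendsto_of_tendsto_of_tendsto_of_le_of_le
      (g := fun k => ψ z₀ - ‖w k - z₀‖) (h := fun k => ψ z₀ + ‖w k - z₀‖)
      (by simpa using (tendsto_const_nhds (x := ψ z₀) (f := atTop (α := ℕ))).sub hnorm)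
      (by simpa using (tendsto_const_nhds (x := ψ z₀) (f := atTop (α := ℕ))).add hnorm)
      (fun k => ?_) (fun k => hψ_lip1 (w k) z₀)
    show ψ z₀ - ‖w k - z₀‖ ≤ ψ (w k)
    have := hψ_lip1 z₀ (w k)
    rw [norm_sub_rev] at this
    linarith
  have hψz₀ : ψ z₀ = d := tendsto_nhds_unique h2 h1
  -- uniqueness of the ψ-minimizer over C
  have huniq : ∀ u, u ∈ C → ψ u ≤ d → u = z₀ := by
    intro u huC hu
    by_contra hne'
    have hεpos : 0 < ‖u - z₀‖ := by
      rw [norm_pos_iff, sub_ne_zero]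
      exact hne'
    obtain ⟨η, hη0, hkey'⟩ := hkey _ hεpos
    have := hkey' u z₀ huC hz₀C (by linarith) (by rw [hψz₀]; linarith)
    exact absurd this (lt_irrefl _)
  -- z₀ is a fixed point
  have hTz₀ : T z₀ = z₀ := by
    have hkey5 := hψ_key z₀ hz₀C
    have hterm_ge : ∀ j : Fin n₀, d ≤ ψ (T^[(j : ℕ) + 1] z₀) := fun j =>
      hd_le _ (hT.iterate ((j : ℕ) + 1) hz₀C)
    have hsum_nonneg : ∀ j : Fin n₀, 0 ≤ α j * (ψ (T^[(j : ℕ) + 1] z₀) - d) := fun j =>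
      mul_nonneg (hα_nonneg j) (by linarith [hterm_ge j])
    have hsum_le : ∑ j : Fin n₀, α j * (ψ (T^[(j : ℕ) + 1] z₀) - d) ≤ 0 := by
      have heq : ∑ j : Fin n₀, α j * (ψ (T^[(j : ℕ) + 1] z₀) - d)
          = (∑ j : Fin n₀, α j * ψ (T^[(j : ℕ) + 1] z₀)) - d := by
        simp [mul_sub, Finset.sum_sub_distrib, ← Finset.sum_mul, hα_sum]
      rw [heq, hψz₀] at *
      linarith [hkey5]
    have h0 : α ⟨0, hn₀⟩ * (ψ (T^[((⟨0, hn₀⟩ : Fin n₀) : ℕ) + 1] z₀) - d) ≤ 0 :=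
      le_trans (Finset.single_le_sum (fun j _ => hsum_nonneg j) (Finset.mem_univ _)) hsum_le
    have h1' : ψ (T^[1] z₀) ≤ d := by
      have h0' : α ⟨0, hn₀⟩ * (ψ (T^[1] z₀) - d) ≤ 0 := h0
      nlinarith [hα_first]
    have := huniq (T^[1] z₀) (hT.iterate 1 hz₀C) h1'
    simpa [Function.iterate_one] using this
  -- conclusion
  refine ⟨z₀, ⟨hz₀C, hTz₀, fun y hyC hyT => ?_⟩, ?_⟩
  · rw [← hψφ z₀ hz₀C hTz₀, ← hψφ y hyC hyT, hψz₀]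
    exact hd_le y hyC
  · rintro y₁ ⟨hy₁C, hy₁T, hy₁min⟩
    have ha : φ y₁ ≤ φ z₀ := hy₁min z₀ hz₀C hTz₀
    have hb : ψ y₁ ≤ d := by
      rw [hψφ y₁ hy₁C hy₁T]
      rw [← hψφ z₀ hz₀C hTz₀, hψz₀] at ha
      exact ha
    exact huniq y₁ hy₁C hb
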